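/- The function φ(t) = 2π ∑_{n=1}^∞ (2π n⁴ e^{-9t/2} - 3 n² e^{-5t/2}) exp(-n² π e^{-2t}) is strictly positive for all real t. -/

import Mathlib

open Real

noncomputable def th (k : ℕ) (u : ℝ) : ℝ := ∑' n : ℤ, (n : ℝ) ^ k * Real.exp (-π * (n : ℝ) ^ 2 * u)

lemma summable_nat (k : ℕ) {u : ℝ} (hu : 0 < u) :
    Summable (fun n : ℕ => (n : ℝ) ^ k * Real.exp (-π * (n : ℝ) ^ 2 * u)) := by
  have hr : |Real.exp (-π * u)| < 1 := by
    rw [abs_of_pos (Real.exp_pos _)]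
    exact Real.exp_lt_one_iff.2 (by nlinarith [Real.pi_pos])
  refine Summable.of_nonneg_of_le (fun n => by positivity) (fun n => ?_)
    (summable_pow_mul_geometric_of_norm_lt_one k hr)
  rw [← Real.exp_nat_mul]
  gcongr (n:ℝ)^k * Real.exp ?_
  have h1 : (n:ℝ) ≤ (n:ℝ)^2 := by exact_mod_cast Nat.le_self_pow two_ne_zero n
  have h2 := mul_le_mul_of_nonneg_left h1 (mul_pos Real.pi_pos hu).le
  linarith

lemma summable_int (k : ℕ) {u : ℝ} (hu : 0 < u) :
    Summable (fun n : ℤ => (n : ℝ) ^ k * Real.exp (-π * (n : ℝ) ^ 2 * u)) := by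
  refine Summable.of_nat_of_neg_add_one ?_ ?_
  · exact_mod_cast summable_nat k hu
  · have h := ((summable_nat_add_iff 1).2 (summable_nat k hu)).mul_left ((-1 : ℝ)^k)
    refine h.congr fun n => ?_
    push_cast
    rw [show ((-1:ℝ))^k * ((n+1)^k * Real.exp (-π * (n+1:ℝ)^2*u)) = ((-1)*(n+1))^k * Real.exp (-π * (n+1:ℝ)^2*u) by rw [mul_pow]; ring]
    ring_nf
  
lemma summable_int_abs (k : ℕ) {u : ℝ} (hu : 0 < u) :
    Summable (fun n : ℤ => |(n : ℝ)| ^ k * Real.exp (-π * (n : ℝ) ^ 2 * u)) := by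
  have := (summable_int k hu).abs
  refine this.congr fun n => ?_
  rw [abs_mul, abs_pow, abs_of_pos (Real.exp_pos _)]

lemma hasDerivAt_th (k : ℕ) {u : ℝ} (hu : 0 < u) :
    HasDerivAt (th k) (-π * th (k + 2) u) u := by
  have key : HasDerivAt (fun y => ∑' n : ℤ, (n : ℝ) ^ k * Real.exp (-π * (n : ℝ) ^ 2 * y))
      (∑' n : ℤ, (-π * (n : ℝ) ^ 2) * ((n : ℝ) ^ k * Real.exp (-π * (n : ℝ) ^ 2 * u))) u := by
    refine hasDerivAt_tsum_of_isPreconnected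
      (u := fun n : ℤ => π * |(n : ℝ)| ^ (k + 2) * Real.exp (-π * (n : ℝ) ^ 2 * (u / 2)))
      (g' := fun n y => (-π * (n : ℝ) ^ 2) * ((n : ℝ) ^ k * Real.exp (-π * (n : ℝ) ^ 2 * y)))
      ?_ (isOpen_Ioi (a := u / 2)) (isPreconnected_Ioi)
      (fun n y _ => ?_) (fun n y hy => ?_) (by simp [hu] : u ∈ Set.Ioi (u/2)) ?_
      (by simp [hu, half_lt_self] : u ∈ Set.Ioi (u/2))
    · have := (summable_int_abs (k + 2) (half_pos hu)).mul_left π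
      exact this.congr fun n => by ring
    · have h1 := (hasDerivAt_id y).const_mul (-π * (n : ℝ) ^ 2)
      simp only [id_eq, mul_one] at h1
      have := (Real.hasDerivAt_exp (-π * (n : ℝ) ^ 2 * y)).comp y h1
      have h2 := this.const_mul ((n : ℝ) ^ k)
      exact h2.congr_deriv (by ring)
    · have hy' : u / 2 < y := hy
      have hexp : Real.exp (-π * (n : ℝ) ^ 2 * y) ≤ Real.exp (-π * (n : ℝ) ^ 2 * (u / 2)) := by
        apply Real.exp_le_exp.2
        nlinarith [mul_nonneg Real.pi_pos.le (sq_nonneg (n:ℝ))]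
      have heq : ‖(-π * (n : ℝ) ^ 2) * ((n : ℝ) ^ k * Real.exp (-π * (n : ℝ) ^ 2 * y))‖
          = π * |(n : ℝ)| ^ (k + 2) * Real.exp (-π * (n : ℝ) ^ 2 * y) := by
        rw [Real.norm_eq_abs, abs_mul, abs_mul, abs_mul, abs_neg, abs_of_pos Real.pi_pos,
          abs_of_pos (Real.exp_pos _), abs_pow, abs_pow, pow_add]
        ring
      rw [heq]
      exact mul_le_mul_of_nonneg_left hexp (by positivity)
    · exact summable_int k hu
  have : (∑' n : ℤ, (-π * (n : ℝ) ^ 2) * ((n : ℝ) ^ k * Real.exp (-π * (n : ℝ) ^ 2 * u)))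
      = -π * th (k + 2) u := by
    rw [th, ← tsum_mul_left]
    exact tsum_congr fun n => by rw [pow_add]; ring
  rw [← this]
  exact key

lemma th0_funct {u : ℝ} (hu : 0 < u) : th 0 u = u ^ (-(1/2) : ℝ) * th 0 u⁻¹ := by
  have h := Real.tsum_exp_neg_mul_int_sq hu
  have l : th 0 u = ∑' n : ℤ, Real.exp (-π * u * (n:ℝ) ^ 2) := by
    rw [th]
    exact tsum_congr fun n => by rw [pow_zero, one_mul]; congr 1; ring
  have r : th 0 u⁻¹ = ∑' n : ℤ, Real.exp (-π / u * (n:ℝ) ^ 2) := by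
    rw [th]
    exact tsum_congr fun n => by rw [pow_zero, one_mul]; congr 1; ring
  rw [l, r, h, one_div, ← Real.rpow_neg hu.le]

lemma rpow_comb {u : ℝ} (hu : 0 < u) {a b c : ℝ} (h : a + b = c) :
    u ^ a * u ^ b = u ^ c := by rw [← h, Real.rpow_add hu]

lemma sq_inv_eq {u : ℝ} (hu : 0 < u) : ((u ^ 2)⁻¹ : ℝ) = u ^ (-2 : ℝ) := by
  rw [← Real.rpow_natCast u 2, ← Real.rpow_neg hu.le]
  norm_num

lemma uinv_eq {u : ℝ} (hu : 0 < u) : (u⁻¹ : ℝ) = u ^ (-1 : ℝ) := by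
  rw [Real.rpow_neg_one]

lemma rpow_shift {u : ℝ} (hu : 0 < u) {a b : ℝ} (h : 1 + a = b) :
    u * u ^ a = u ^ b := by
  nth_rewrite 1 [← Real.rpow_one u]
  exact rpow_comb hu h

lemma th2_funct {u : ℝ} (hu : 0 < u) :
    2*π*th 2 u = u ^ (-(3/2):ℝ) * th 0 u⁻¹ - 2*π*(u ^ (-(5/2):ℝ) * th 2 u⁻¹) := by
  have hv : (0:ℝ) < u⁻¹ := inv_pos.2 hu
  have hinv := hasDerivAt_inv hu.ne'
  have hL0 : HasDerivAt (th 0) (-π * th 2 u) u := hasDerivAt_th 0 hu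
  have hcomp0 : HasDerivAt (fun y : ℝ => th 0 y⁻¹) (-π * th 2 u⁻¹ * -(u^2)⁻¹) u :=
    (hasDerivAt_th 0 hv).comp u hinv
  have hpow0 : HasDerivAt (fun y : ℝ => y ^ (-(1/2):ℝ)) (-(1/2) * u ^ (-(1/2) - 1 : ℝ)) u :=
    Real.hasDerivAt_rpow_const (Or.inl hu.ne')
  have hR0 := hpow0.mul hcomp0
  have hev0 : th 0 =ᶠ[nhds u] (fun y : ℝ => y ^ (-(1/2):ℝ) * th 0 y⁻¹) := by
    filter_upwards [Ioi_mem_nhds hu] with y hy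
    exact th0_funct hy
  have heq1 := hL0.unique (hR0.congr_of_eventuallyEq hev0)
  rw [show (-(1/2) : ℝ) - 1 = -(3/2) by norm_num] at heq1
  have hp : u ^ (-(1/2):ℝ) * (u^2)⁻¹ = u ^ (-(5/2):ℝ) := by
    rw [sq_inv_eq hu]; exact rpow_comb hu (by norm_num)
  linear_combination (-2) * heq1 + (-2*π*th 2 u⁻¹) * hp

lemma th4_funct {u : ℝ} (hu : 0 < u) :
    4*π^2*th 4 u = 3*(u ^ (-(5/2):ℝ) * th 0 u⁻¹) - 12*π*(u ^ (-(7/2):ℝ) * th 2 u⁻¹)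
      + 4*π^2*(u ^ (-(9/2):ℝ) * th 4 u⁻¹) := by
  have hv : (0:ℝ) < u⁻¹ := inv_pos.2 hu
  have hinv := hasDerivAt_inv hu.ne'
  have hG : HasDerivAt (fun y => 2*π*th 2 y) (2*π*(-π * th 4 u)) u :=
    (hasDerivAt_th 2 hu).const_mul (2*π)
  have hcomp0 : HasDerivAt (fun y : ℝ => th 0 y⁻¹) (-π * th 2 u⁻¹ * -(u^2)⁻¹) u :=
    (hasDerivAt_th 0 hv).comp u hinv
  have hcomp2 : HasDerivAt (fun y : ℝ => th 2 y⁻¹) (-π * th 4 u⁻¹ * -(u^2)⁻¹) u :=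
    (hasDerivAt_th 2 hv).comp u hinv
  have hpow3 : HasDerivAt (fun y : ℝ => y ^ (-(3/2):ℝ)) (-(3/2) * u ^ (-(3/2) - 1 : ℝ)) u :=
    Real.hasDerivAt_rpow_const (Or.inl hu.ne')
  have hpow5 : HasDerivAt (fun y : ℝ => y ^ (-(5/2):ℝ)) (-(5/2) * u ^ (-(5/2) - 1 : ℝ)) u :=
    Real.hasDerivAt_rpow_const (Or.inl hu.ne')
  have hH := (hpow3.mul hcomp0).sub ((hpow5.mul hcomp2).const_mul (2*π))
  have hev : (fun y => 2*π*th 2 y) =ᶠ[nhds u]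
      (fun y : ℝ => y ^ (-(3/2):ℝ) * th 0 y⁻¹ - 2*π*(y ^ (-(5/2):ℝ) * th 2 y⁻¹)) := by
    filter_upwards [Ioi_mem_nhds hu] with y hy
    exact th2_funct hy
  have heq2 := hG.unique (hH.congr_of_eventuallyEq hev)
  rw [show (-(3/2) : ℝ) - 1 = -(5/2) by norm_num,
    show (-(5/2) : ℝ) - 1 = -(7/2) by norm_num] at heq2
  have hq1 : u ^ (-(3/2):ℝ) * (u^2)⁻¹ = u ^ (-(7/2):ℝ) := by
    rw [sq_inv_eq hu]; exact rpow_comb hu (by norm_num)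
  have hq2 : u ^ (-(5/2):ℝ) * (u^2)⁻¹ = u ^ (-(9/2):ℝ) := by
    rw [sq_inv_eq hu]; exact rpow_comb hu (by norm_num)
  linear_combination (-2) * heq2 + (-2*π*th 2 u⁻¹) * hq1 + (4*π^2*th 4 u⁻¹) * hq2

lemma key_identity {u : ℝ} (hu : 0 < u) :
    2*π*u*th 4 u - 3*th 2 u
      = u ^ (-(5/2):ℝ) * (2*π*u⁻¹*th 4 u⁻¹ - 3*th 2 u⁻¹) := by
  have hr1 : u * u ^ (-(5/2):ℝ) = u ^ (-(3/2):ℝ) := rpow_shift hu (by norm_num)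
  have hr2 : u * u ^ (-(7/2):ℝ) = u ^ (-(5/2):ℝ) := rpow_shift hu (by norm_num)
  have hr3 : u * u ^ (-(9/2):ℝ) = u ^ (-(7/2):ℝ) := rpow_shift hu (by norm_num)
  have hr4 : u ^ (-(5/2):ℝ) * u⁻¹ = u ^ (-(7/2):ℝ) := by
    rw [uinv_eq hu]; exact rpow_comb hu (by norm_num)
  have h2 := th2_funct hu
  have h4 := th4_funct hu
  have h2pi : (2*π : ℝ) ≠ 0 := by positivity
  apply mul_left_cancel₀ h2pi
  linear_combination u * h4 - 3 * h2 + (3 * th 0 u⁻¹) * hr1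
    + (-12*π*th 2 u⁻¹) * hr2 + (4*π^2*th 4 u⁻¹) * hr3 + (-4*π^2*th 4 u⁻¹) * hr4

lemma D_eq {u : ℝ} (hu : 0 < u) :
    2*π*u*th 4 u - 3*th 2 u
      = ∑' n : ℤ, (2*π*u*(n:ℝ)^4 - 3*(n:ℝ)^2) * Real.exp (-π * (n:ℝ)^2 * u) := by
  rw [th, th, ← tsum_mul_left, ← tsum_mul_left,
    ← Summable.tsum_sub ((summable_int 4 hu).mul_left (2*π*u)) ((summable_int 2 hu).mul_left 3)]
  exact tsum_congr fun n => by ring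

lemma D_summable {u : ℝ} (hu : 0 < u) :
    Summable (fun n : ℤ => (2*π*u*(n:ℝ)^4 - 3*(n:ℝ)^2) * Real.exp (-π * (n:ℝ)^2 * u)) := by
  refine (((summable_int 4 hu).mul_left (2*π*u)).sub ((summable_int 2 hu).mul_left 3)).congr
    fun n => by ring

lemma D_pos_of_one_le {u : ℝ} (hu1 : 1 ≤ u) : 0 < 2*π*u*th 4 u - 3*th 2 u := by
  have hu : (0:ℝ) < u := lt_of_lt_of_le one_pos hu1
  rw [D_eq hu]
  have hπ := Real.pi_gt_three
  refine Summable.tsum_pos (D_summable hu) (fun n => ?_) 1 ?_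
  · rcases eq_or_ne n 0 with rfl | hn
    · simp
    · have h1 : (1:ℝ) ≤ (n:ℝ)^2 := by
        have : (1:ℤ) ≤ n^2 := by rcases lt_or_gt_of_ne hn with h | h <;> nlinarith
        exact_mod_cast this
      have h2 : (0:ℝ) ≤ Real.exp (-π * (n:ℝ)^2 * u) := (Real.exp_pos _).le
      have h3 : (0:ℝ) ≤ (n:ℝ)^2 * ((n:ℝ)^2 - 1) :=
        mul_nonneg (sq_nonneg _) (by linarith)
      have h5 : (6:ℝ) ≤ 2*π*u := by nlinarith [mul_le_mul_of_nonneg_left hu1 Real.pi_pos.le]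
      have h6 : (0:ℝ) ≤ (2*π*u - 6) * (n:ℝ)^4 := mul_nonneg (by linarith) (by positivity)
      have h4 : (2*π*u*(n:ℝ)^4 - 3*(n:ℝ)^2) ≥ 0 := by nlinarith [h3, h5, h6]
      positivity
  · push_cast
    have h2 := Real.exp_pos (-π * (1:ℝ)^2 * u)
    have : (0:ℝ) < 2*π*u*(1:ℝ)^4 - 3*(1:ℝ)^2 := by nlinarith
    positivity

lemma D_pos {u : ℝ} (hu : 0 < u) : 0 < 2*π*u*th 4 u - 3*th 2 u := by
  rcases le_or_gt 1 u with h | h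
  · exact D_pos_of_one_le h
  · have hv : 1 ≤ u⁻¹ := by
      rw [← one_div, le_div_iff₀ hu]; linarith
    rw [key_identity hu]
    exact mul_pos (Real.rpow_pos_of_pos hu _) (D_pos_of_one_le hv)

lemma summable_f {u : ℝ} (hu : 0 < u) :
    Summable (fun n : ℕ =>
      (2*π*u*((n:ℝ)+1)^4 - 3*((n:ℝ)+1)^2) * Real.exp (-π*((n:ℝ)+1)^2*u)) := by
  have h4 := ((summable_nat_add_iff 1).2 (summable_nat 4 hu)).mul_left (2*π*u)
  have h2 := ((summable_nat_add_iff 1).2 (summable_nat 2 hu)).mul_left 3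
  refine (h4.sub h2).congr fun n => ?_
  push_cast
  ring


set_option maxHeartbeats 1000000 in
lemma D_eq_nat {u : ℝ} (hu : 0 < u) :
    2*π*u*th 4 u - 3*th 2 u
      = 2 * ∑' n : ℕ, (2*π*u*((n:ℝ)+1)^4 - 3*((n:ℝ)+1)^2) * Real.exp (-π*((n:ℝ)+1)^2*u) := by
  have hpos : Summable (fun n : ℕ =>
      (2*π*u*((((n:ℤ)+1):ℤ):ℝ)^4 - 3*((((n:ℤ)+1):ℤ):ℝ)^2) * Real.exp (-π*((((n:ℤ)+1):ℤ):ℝ)^2*u)) := by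
    refine (summable_f hu).congr fun n => ?_
    push_cast
    ring_nf
  have hneg : Summable (fun n : ℕ =>
      (2*π*u*(((-((n:ℤ)+1)):ℤ):ℝ)^4 - 3*(((-((n:ℤ)+1)):ℤ):ℝ)^2) * Real.exp (-π*(((-((n:ℤ)+1)):ℤ):ℝ)^2*u)) := by
    refine (summable_f hu).congr fun n => ?_
    push_cast
    ring_nf
  have hz := tsum_of_add_one_of_neg_add_one
    (f := fun n : ℤ => (2*π*u*(n:ℝ)^4 - 3*(n:ℝ)^2) * Real.exp (-π*(n:ℝ)^2*u)) hpos hneg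
  rw [D_eq hu, hz]
  have e1 : (∑' n : ℕ, (2*π*u*((((n:ℤ)+1):ℤ):ℝ)^4 - 3*((((n:ℤ)+1):ℤ):ℝ)^2) * Real.exp (-π*((((n:ℤ)+1):ℤ):ℝ)^2*u))
      = ∑' n : ℕ, (2*π*u*((n:ℝ)+1)^4 - 3*((n:ℝ)+1)^2) * Real.exp (-π*((n:ℝ)+1)^2*u) := by
    refine tsum_congr fun n => ?_
    push_cast
    ring_nf
  have e2 : (∑' n : ℕ, (2*π*u*(((-((n:ℤ)+1)):ℤ):ℝ)^4 - 3*(((-((n:ℤ)+1)):ℤ):ℝ)^2) * Real.exp (-π*(((-((n:ℤ)+1)):ℤ):ℝ)^2*u))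
      = ∑' n : ℕ, (2*π*u*((n:ℝ)+1)^4 - 3*((n:ℝ)+1)^2) * Real.exp (-π*((n:ℝ)+1)^2*u) := by
    refine tsum_congr fun n => ?_
    push_cast
    ring_nf
  rw [e1, e2]
  norm_num
  ring

noncomputable def phi (t : ℝ) : ℝ :=
  2 * π * ∑' n : ℕ,
    (2 * π * ((n : ℝ) + 1) ^ 4 * Real.exp (-9 * t / 2)
      - 3 * ((n : ℝ) + 1) ^ 2 * Real.exp (-5 * t / 2))
    * Real.exp (-((n : ℝ) + 1) ^ 2 * π * Real.exp (-2 * t))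

theorem phi_pos : ∀ t : ℝ, 0 < phi t := by
  intro t
  set u : ℝ := Real.exp (-2*t) with hudef
  have hu : (0:ℝ) < u := Real.exp_pos _
  have hD := D_pos hu
  have hDnat := D_eq_nat hu
  have hphi : phi t = 2*π*(Real.exp (-5*t/2)
      * ∑' n : ℕ, (2*π*u*((n:ℝ)+1)^4 - 3*((n:ℝ)+1)^2) * Real.exp (-π*((n:ℝ)+1)^2*u)) := by
    unfold phi
    congr 1
    rw [← tsum_mul_left]
    refine tsum_congr fun n => ?_
    have h9 : Real.exp (-9*t/2) = Real.exp (-5*t/2) * u := by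
      rw [hudef, ← Real.exp_add]
      congr 1
      ring
    have harg : -((n:ℝ)+1)^2*π*u = -π*((n:ℝ)+1)^2*u := by ring
    rw [h9, harg]
    ring
  have hS : 0 < ∑' n : ℕ, (2*π*u*((n:ℝ)+1)^4 - 3*((n:ℝ)+1)^2) * Real.exp (-π*((n:ℝ)+1)^2*u) := by
    rw [hDnat] at hD
    linarith
  rw [hphi]
  have he := Real.exp_pos (-5*t/2)
  have hπ := Real.pi_pos
  exact mul_pos (by positivity) (mul_pos he hS)
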